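/- Let k ≥ 1 and m ≥ 0, and let G_k(m, m+k−1) denote the number of sequences of m entries +1 and (m+k−1) entries −1 all of whose partial sums are strictly greater than −k. Then (2m + k) · G_k(m, m+k−1) = k · C(2m+k, m); equivalently, G_k(m, m+k−1) = C(2m+k−1, m) − C(2m+k−1, m−1). -/

import Mathlib

/-- The partial sum `a 0 + a 1 + ⋯ + a i` of the sequence `a`. -/
def partialSum {n : ℕ} (a : Fin n → ℤ) (i : Fin n) : ℤ :=
  ∑ j ∈ Finset.univ.filter (fun j => j ≤ i), a j

/-- `a` is a sequence of `m` entries `+1` and `n` entries `-1`, all of whose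
(nonempty) partial sums are strictly greater than `-k`. -/
def BaileySeq (k m n : ℕ) (a : Fin (m + n) → ℤ) : Prop :=
  (∀ i, a i = 1 ∨ a i = -1) ∧
  (Finset.univ.filter (fun i => a i = -1)).card = n ∧
  ∀ i : Fin (m + n), -(k : ℤ) < partialSum a i

/-- Binomial coefficient `C(a, b)` with integer lower index, equal to `0` when
`b < 0`. -/
def chooseInt (a : ℕ) (b : ℤ) : ℤ :=
  if 0 ≤ b then (a.choose b.toNat : ℤ) else 0

set_option linter.unreachableTactic false
set_option linter.unusedTactic false
set_option linter.unnecessarySeqFocus false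

def LPred (k m n : ℕ) (l : List ℤ) : Prop :=
  (∀ x ∈ l, x = 1 ∨ x = -1) ∧ l.length = m + n ∧ l.count (-1) = n ∧
    ∀ i < l.length, -(k:ℤ) < (l.take (i+1)).sum

instance lpredFinite (k m n : ℕ) : Finite {l : List ℤ // LPred k m n l} := by
  apply Finite.of_injective (fun l : {l : List ℤ // LPred k m n l} => (fun i : Fin (m+n) =>
    decide (l.val[i.val]'(by rw [l.2.2.1]; exact i.2) = 1)))
  rintro ⟨l, hl⟩ ⟨l', hl'⟩ h
  ext1
  apply List.ext_getElem (by rw [hl.2.1, hl'.2.1])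
  intro i h1 h2
  have hi : i < m + n := by rw [hl.2.1] at h1; exact h1
  have := congrFun h ⟨i, hi⟩
  simp only [decide_eq_decide] at this
  rcases hl.1 _ (l.getElem_mem h1) with h3 | h3 <;>
    rcases hl'.1 _ (l'.getElem_mem h2) with h4 | h4 <;>
    simp only [h3, h4] at this ⊢ <;> first | rfl | omega | (exfalso; revert this; norm_num)

lemma lpred_cons_iff (k m n : ℕ) (hk : 1 ≤ k) (x : ℤ) (t : List ℤ) :
    LPred k m n (x :: t) ↔
      (x = 1 ∧ 1 ≤ m ∧ LPred (k+1) (m-1) n t) ∨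
      (x = -1 ∧ 2 ≤ k ∧ 1 ≤ n ∧ LPred (k-1) m (n-1) t) := by
  constructor
  · rintro ⟨hok, hlen, hcnt, hsum⟩
    have hlen' : t.length + 1 = m + n := by simpa using hlen
    have hcnt' : t.count (-1) ≤ t.length := List.count_le_length
    rcases hok x (by simp) with hx | hx
    · subst hx
      have hct : t.count (-1) = n := by simpa using hcnt
      have hm : 1 ≤ m := by omega
      refine Or.inl ⟨rfl, hm, fun y hy => hok y (by simp [hy]), by omega, hct, ?_⟩
      intro i hi
      have := hsum (i+1) (by simpa using (by omega : i + 1 < t.length + 1))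
      rw [List.take_succ_cons, List.sum_cons] at this
      push_cast
      linarith
    · subst hx
      have h0 := hsum 0 (by simp)
      simp at h0
      have hk2 : 2 ≤ k := by
        by_contra h
        interval_cases k <;> simp_all
      have hct : t.count (-1) + 1 = n := by
        have := hcnt
        simp [List.count_cons] at this
        omega
      refine Or.inr ⟨rfl, hk2, by omega, fun y hy => hok y (by simp [hy]), by omega, by omega, ?_⟩
      intro i hi
      have := hsum (i+1) (by simpa using (by omega : i + 1 < t.length + 1))
      rw [List.take_succ_cons, List.sum_cons] at this
      have : -(k:ℤ) + 1 < (t.take (i+1)).sum := by linarith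
      calc -((k-1 : ℕ) : ℤ) = -(k:ℤ) + 1 := by push_cast [Nat.cast_sub hk]; ring
        _ < _ := this
  · rintro (⟨rfl, hm, hok, hlen, hcnt, hsum⟩ | ⟨rfl, hk2, hn, hok, hlen, hcnt, hsum⟩)
    · refine ⟨?_, by simp; omega, by simpa [List.count_cons] using hcnt, ?_⟩
      · rintro y hy; rcases List.mem_cons.1 hy with rfl | hy
        · exact Or.inl rfl
        · exact hok y hy
      · intro i hi
        cases i with
        | zero => simp; omega
        | succ j =>
          rw [List.take_succ_cons, List.sum_cons]
          have := hsum j (by simp at hi; omega)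
          push_cast at this ⊢
          linarith
    · refine ⟨?_, by simp; omega, ?_, ?_⟩
      · rintro y hy; rcases List.mem_cons.1 hy with rfl | hy
        · exact Or.inr rfl
        · exact hok y hy
      · simp [List.count_cons, hcnt]; omega
      · intro i hi
        cases i with
        | zero => simp; omega
        | succ j =>
          rw [List.take_succ_cons, List.sum_cons]
          have := hsum j (by simp at hi; omega)
          have hcast : -((k-1 : ℕ) : ℤ) = -(k:ℤ) + 1 := by push_cast [Nat.cast_sub hk]; ring
          rw [hcast] at this
          linarith

lemma card_zero (k m : ℕ) (hk : 1 ≤ k) : Nat.card {l : List ℤ // LPred k m 0 l} = 1 := by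
  rw [Nat.card_eq_one_iff_unique]
  have hrep : LPred k m 0 (List.replicate m 1) := by
    refine ⟨fun x hx => Or.inl (List.eq_of_mem_replicate hx), by simp, by simp [List.count_replicate], ?_⟩
    intro i hi
    rw [List.take_replicate, List.sum_replicate]
    simp
    have : (0:ℤ) ≤ min (i+1) m := by positivity
    omega
  constructor
  · constructor
    rintro ⟨l, hok, hlen, hcnt, -⟩ ⟨l', hok', hlen', hcnt', -⟩
    have h1 : l = List.replicate m 1 := by
      rw [List.eq_replicate_iff]
      refine ⟨by simpa using hlen, fun x hx => ?_⟩
      rcases hok x hx with h | h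
      · exact h
      · exfalso; subst h; rw [List.count_eq_zero] at hcnt; exact hcnt hx
    have h2 : l' = List.replicate m 1 := by
      rw [List.eq_replicate_iff]
      refine ⟨by simpa using hlen', fun x hx => ?_⟩
      rcases hok' x hx with h | h
      · exact h
      · exfalso; subst h; rw [List.count_eq_zero] at hcnt'; exact hcnt' hx
    simp [h1, h2]
  · exact ⟨⟨List.replicate m 1, hrep⟩⟩

lemma card_split (k m n : ℕ) (hk : 1 ≤ k) (hmn : 1 ≤ m + n) :
    Nat.card {l : List ℤ // LPred k m n l} =
      Nat.card {t : List ℤ // 1 ≤ m ∧ LPred (k+1) (m-1) n t} +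
      Nat.card {t : List ℤ // 2 ≤ k ∧ 1 ≤ n ∧ LPred (k-1) m (n-1) t} := by
  have f1 : Finite {t : List ℤ // 1 ≤ m ∧ LPred (k+1) (m-1) n t} :=
    Finite.of_injective (fun t => (⟨t.1, t.2.2⟩ : {l : List ℤ // LPred (k+1) (m-1) n l}))
      (fun a b h => Subtype.ext (Subtype.mk_eq_mk.mp h))
  have f2 : Finite {t : List ℤ // 2 ≤ k ∧ 1 ≤ n ∧ LPred (k-1) m (n-1) t} :=
    Finite.of_injective (fun t => (⟨t.1, t.2.2.2⟩ : {l : List ℤ // LPred (k-1) m (n-1) l}))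
      (fun a b h => Subtype.ext (Subtype.mk_eq_mk.mp h))
  rw [← Nat.card_sum]
  apply Nat.card_congr
  apply Equiv.symm
  apply Equiv.ofBijective (f := Sum.elim
    (fun t : {t : List ℤ // 1 ≤ m ∧ LPred (k+1) (m-1) n t} =>
      (⟨(1 : ℤ) :: t.1, (lpred_cons_iff k m n hk 1 t.1).2 (Or.inl ⟨rfl, t.2⟩)⟩ :
        {l : List ℤ // LPred k m n l}))
    (fun t : {t : List ℤ // 2 ≤ k ∧ 1 ≤ n ∧ LPred (k-1) m (n-1) t} =>
      (⟨(-1 : ℤ) :: t.1, (lpred_cons_iff k m n hk (-1) t.1).2 (Or.inr ⟨rfl, t.2⟩)⟩ :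
        {l : List ℤ // LPred k m n l})))
  constructor
  · rintro (⟨t, ht⟩ | ⟨t, ht⟩) (⟨t', ht'⟩ | ⟨t', ht'⟩) h <;>
      simp only [Sum.elim_inl, Sum.elim_inr, Subtype.mk.injEq, List.cons.injEq] at h
    · simp [h.2]
    · exfalso; norm_num at h
    · exfalso; norm_num at h
    · simp [h.2]
  · rintro ⟨l, hl⟩
    match l, hl with
    | [], hl => exact absurd hl.2.1 (by simp; omega)
    | x :: t, hl =>
      rcases (lpred_cons_iff k m n hk x t).1 hl with ⟨rfl, h⟩ | ⟨rfl, h⟩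
      · exact ⟨Sum.inl ⟨t, h⟩, rfl⟩
      · exact ⟨Sum.inr ⟨t, h⟩, rfl⟩

lemma main_count : ∀ N k m n, 1 ≤ k → m + n = N → n ≤ m + k →
    (Nat.card {l : List ℤ // LPred k m n l} : ℤ)
      = ((m+n).choose n : ℤ) - ((m+n).choose (m+k) : ℤ) := by
  intro N
  induction N with
  | zero =>
    intro k m n hk hmn hnk
    obtain ⟨rfl, rfl⟩ : m = 0 ∧ n = 0 := by omega
    rw [card_zero k 0 hk]
    simp [Nat.choose_eq_zero_of_lt (show 0 < k by omega)]
  | succ N ih =>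
    intro k m n hk hmn hnk
    rcases Nat.eq_zero_or_pos n with rfl | hn
    · rw [card_zero k m hk]
      simp [Nat.choose_eq_zero_of_lt (show m < m + k by omega)]
    rw [card_split k m n hk (by omega)]
    rcases Nat.eq_zero_or_pos m with rfl | hm
    · have h1 : Nat.card {t : List ℤ // 1 ≤ 0 ∧ LPred (k+1) (0-1) n t} = 0 := by
        have : IsEmpty {t : List ℤ // 1 ≤ 0 ∧ LPred (k+1) (0-1) n t} := ⟨fun t => by omega⟩
        exact Nat.card_of_isEmpty
      rcases Nat.lt_or_ge k 2 with hk2 | hk2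
      · obtain rfl : k = 1 := by omega
        obtain rfl : n = 1 := by omega
        have h2 : Nat.card {t : List ℤ // 2 ≤ 1 ∧ 1 ≤ 1 ∧ LPred (1-1) 0 (1-1) t} = 0 := by
          have : IsEmpty {t : List ℤ // 2 ≤ 1 ∧ 1 ≤ 1 ∧ LPred (1-1) 0 (1-1) t} :=
            ⟨fun t => by omega⟩
          exact Nat.card_of_isEmpty
        rw [h1, h2]
        norm_num
      · have e2 : Nat.card {t : List ℤ // 2 ≤ k ∧ 1 ≤ n ∧ LPred (k-1) 0 (n-1) t}
            = Nat.card {t : List ℤ // LPred (k-1) 0 (n-1) t} :=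
          Nat.card_congr (Equiv.subtypeEquivRight (fun t =>
            ⟨fun h => h.2.2, fun h => ⟨hk2, hn, h⟩⟩))
        rw [h1, e2]
        push_cast
        rw [ih (k-1) 0 (n-1) (by omega) (by omega) (by omega)]
        have c1 : (0 + n).choose n = (0 + (n-1)).choose (n-1) := by
          simp [Nat.choose_self]
        have c2 : (0 + n).choose (0 + k) = (0 + (n-1)).choose (0 + (k-1)) := by
          simp only [Nat.zero_add]
          obtain ⟨n', rfl⟩ : ∃ n', n = n' + 1 := ⟨n - 1, by omega⟩
          obtain ⟨k', rfl⟩ : ∃ k', k = k' + 1 := ⟨k - 1, by omega⟩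
          rw [Nat.choose_succ_succ]
          have hz : n'.choose (k'+1) = 0 := Nat.choose_eq_zero_of_lt (by omega)
          simp [hz]
        rw [c1, c2]
        push_cast
        ring
    · have e1 : Nat.card {t : List ℤ // 1 ≤ m ∧ LPred (k+1) (m-1) n t}
          = Nat.card {t : List ℤ // LPred (k+1) (m-1) n t} :=
        Nat.card_congr (Equiv.subtypeEquivRight (fun t =>
          ⟨fun h => h.2, fun h => ⟨hm, h⟩⟩))
      have i1 := ih (k+1) (m-1) n (by omega) (by omega) (by omega)
      have hm1 : (m - 1) + n = N := by omega
      have hmk1 : (m - 1) + (k + 1) = m + k := by omega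
      rw [hm1, hmk1] at i1
      rw [e1]
      push_cast
      rw [i1]
      rcases Nat.lt_or_ge k 2 with hk2 | hk2
      · obtain rfl : k = 1 := by omega
        have h2 : Nat.card {t : List ℤ // 2 ≤ 1 ∧ 1 ≤ n ∧ LPred (1-1) m (n-1) t} = 0 := by
          have : IsEmpty {t : List ℤ // 2 ≤ 1 ∧ 1 ≤ n ∧ LPred (1-1) m (n-1) t} :=
            ⟨fun t => by omega⟩
          exact Nat.card_of_isEmpty
        rw [h2]
        obtain ⟨n', rfl⟩ : ∃ n', n = n' + 1 := ⟨n - 1, by omega⟩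
        have hNe : m + n' = N := by omega
        have p1 : (m + (n'+1)).choose (n'+1) = N.choose n' + N.choose (n'+1) := by
          rw [show m + (n'+1) = N + 1 by omega, Nat.choose_succ_succ]
        have p2 : (m + (n'+1)).choose (m+1) = N.choose m + N.choose (m+1) := by
          rw [show m + (n'+1) = N + 1 by omega, Nat.choose_succ_succ]
        have sym : N.choose n' = N.choose m := by
          have h' := Nat.choose_symm (by omega : n' ≤ N)
          rw [show N - n' = m by omega] at h'
          exact h'.symm
        rw [p1, p2, sym]
        push_cast
        ring
      · have e2 : Nat.card {t : List ℤ // 2 ≤ k ∧ 1 ≤ n ∧ LPred (k-1) m (n-1) t}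
            = Nat.card {t : List ℤ // LPred (k-1) m (n-1) t} :=
          Nat.card_congr (Equiv.subtypeEquivRight (fun t =>
            ⟨fun h => h.2.2, fun h => ⟨hk2, hn, h⟩⟩))
        have i2 := ih (k-1) m (n-1) (by omega) (by omega) (by omega)
        have hm2 : m + (n - 1) = N := by omega
        rw [hm2] at i2
        rw [e2] at *
        rw [i2]
        obtain ⟨n', rfl⟩ : ∃ n', n = n' + 1 := ⟨n - 1, by omega⟩
        obtain ⟨j, hj⟩ : ∃ j, m + k = j + 1 := ⟨m + k - 1, by omega⟩
        have p1 : (m + (n'+1)).choose (n'+1) = N.choose n' + N.choose (n'+1) := by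
          rw [show m + (n'+1) = N + 1 by omega, Nat.choose_succ_succ]
        have p2 : (m + (n'+1)).choose (m+k) = N.choose j + N.choose (j+1) := by
          rw [show m + (n'+1) = N + 1 by omega, hj, Nat.choose_succ_succ]
        rw [p1, p2, hj, show m + (k-1) = j by omega, show (n'+1) - 1 = n' by omega]
        push_cast
        ring

lemma countP_eq_sum {α : Type*} (p : α → Prop) [DecidablePred p] (l : List α) :
    l.countP (fun x => decide (p x)) = (l.map (fun x => if p x then 1 else 0)).sum := by
  induction l with
  | nil => simp
  | cons x t ih =>
    simp only [List.countP_cons, List.map_cons, List.sum_cons, ih]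
    by_cases h : p x <;> simp [h] <;> omega

lemma count_ofFn_eq (N : ℕ) (a : Fin N → ℤ) :
    (List.ofFn a).count (-1) = (Finset.univ.filter (fun i => a i = -1)).card := by
  rw [List.ofFn_eq_map, List.count_eq_countP, List.countP_map]
  rw [Finset.card_filter, Fin.sum_univ_def]
  have := countP_eq_sum (fun i : Fin N => a i = -1) (List.finRange N)
  convert this using 2
  funext x; rw [Function.comp_apply, Bool.eq_iff_iff]; simp

lemma partialSum_eq {N : ℕ} (a : Fin N → ℤ) (i : Fin N) :
    partialSum a i = ((List.ofFn a).take (i.val+1)).sum := by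
  rw [List.sum_take_ofFn]
  unfold partialSum
  congr 1
  ext j
  simp only [Finset.mem_filter, Finset.mem_univ, true_and, Fin.le_def, Nat.lt_succ_iff]

lemma bailey_iff (k m n : ℕ) (a : Fin (m+n) → ℤ) :
    BaileySeq k m n a ↔ LPred k m n (List.ofFn a) := by
  unfold BaileySeq LPred
  rw [List.forall_mem_ofFn_iff, List.length_ofFn, count_ofFn_eq]
  constructor
  · rintro ⟨h1, h2, h3⟩
    refine ⟨h1, rfl, h2, ?_⟩
    intro i hi
    have := h3 ⟨i, hi⟩
    rwa [partialSum_eq] at this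
  · rintro ⟨h1, -, h2, h3⟩
    refine ⟨h1, h2, ?_⟩
    intro i
    rw [partialSum_eq]
    exact h3 i.val i.2

lemma card_transfer (k m n : ℕ) :
    Nat.card {a : Fin (m+n) → ℤ // BaileySeq k m n a}
      = Nat.card {l : List ℤ // LPred k m n l} := by
  apply Nat.card_congr
  apply Equiv.ofBijective (f := fun a => ⟨List.ofFn a.1, (bailey_iff k m n a.1).1 a.2⟩)
  constructor
  · rintro ⟨a, ha⟩ ⟨b, hb⟩ h
    simp only [Subtype.mk.injEq] at h
    exact Subtype.ext (List.ofFn_injective h)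
  · rintro ⟨l, hl⟩
    have hlen : l.length = m + n := hl.2.1
    refine ⟨⟨fun i => l[i.val]'(by omega), ?_⟩, ?_⟩
    · rw [bailey_iff]
      convert hl using 2
      apply List.ext_getElem (by simp [hlen])
      intro i h1 h2
      simp
    · apply Subtype.ext
      apply List.ext_getElem (by simp [hlen])
      intro i h1 h2
      simp

theorem bailey_special_count (k : ℕ) (hk : 1 ≤ k) (m : ℕ) :
    (2 * m + k) * Nat.card {a : Fin (m + (m + k - 1)) → ℤ // BaileySeq k m (m + k - 1) a}
        = k * (2 * m + k).choose m ∧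
    ((Nat.card {a : Fin (m + (m + k - 1)) → ℤ // BaileySeq k m (m + k - 1) a} : ℕ) : ℤ)
        = ((2 * m + k - 1).choose m : ℤ) - chooseInt (2 * m + k - 1) ((m : ℤ) - 1) := by
  have hc := card_transfer k m (m+k-1)
  set c := Nat.card {a : Fin (m + (m + k - 1)) → ℤ // BaileySeq k m (m + k - 1) a} with hcdef
  have hmain := main_count (m + (m+k-1)) k m (m+k-1) hk rfl (by omega)
  rw [← hc] at hmain
  rw [show m + (m + k - 1) = 2*m+k-1 by omega] at hmain
  have hsym1 : (2*m+k-1).choose (m+k-1) = (2*m+k-1).choose m := by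
    have h := Nat.choose_symm (show m ≤ 2*m+k-1 by omega)
    rw [show 2*m+k-1-m = m+k-1 by omega] at h
    exact h
  rw [hsym1] at hmain
  rcases Nat.eq_zero_or_pos m with rfl | hm
  · have h0 : (2*0+k-1).choose (0+k) = 0 := Nat.choose_eq_zero_of_lt (by omega)
    rw [h0] at hmain
    have hch : (2*0+k-1).choose 0 = 1 := Nat.choose_zero_right _
    rw [hch] at hmain
    have hc1 : c = 1 := by
      push_cast at hmain
      exact_mod_cast hmain
    constructor
    · rw [hc1, Nat.choose_zero_right]
      omega
    · rw [hc1]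
      have : chooseInt (2*0+k-1) ((0:ℕ) - 1 : ℤ) = 0 := by
        unfold chooseInt
        norm_num
      rw [hch] at *
      push_cast
      unfold chooseInt
      norm_num
  · have hsym2 : (2*m+k-1).choose (m+k) = (2*m+k-1).choose (m-1) := by
      have h := Nat.choose_symm (show m+k ≤ 2*m+k-1 by omega)
      rw [show 2*m+k-1-(m+k) = m-1 by omega] at h
      exact h.symm
    rw [hsym2] at hmain
    have hci : chooseInt (2*m+k-1) ((m:ℤ) - 1) = ((2*m+k-1).choose (m-1) : ℤ) := by
      unfold chooseInt
      rw [if_pos (by exact_mod_cast Int.sub_nonneg.2 (by exact_mod_cast hm : (1:ℤ) ≤ m))]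
      congr 1
      rw [show (m:ℤ) - 1 = ((m - 1 : ℕ) : ℤ) by omega, Int.toNat_natCast]
    refine ⟨?_, by rw [hci]; exact hmain⟩
    -- Now the product identity
    have A := Nat.choose_mul_succ_eq (2*m+k-1) m
    have B := Nat.add_one_mul_choose_eq (2*m+k-1) (m-1)
    rw [show (2*m+k-1) + 1 = 2*m+k by omega] at A
    rw [show (2*m+k-1) + 1 = 2*m+k by omega, show (m-1) + 1 = m by omega] at B
    rw [show 2*m+k - m = m+k by omega] at A
    have AZ : ((2*m+k-1).choose m : ℤ) * (2*m+k) = ((2*m+k).choose m : ℤ) * (m+k) := by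
      exact_mod_cast congrArg (Nat.cast : ℕ → ℤ) A
    have BZ : ((2*m+k) : ℤ) * ((2*m+k-1).choose (m-1) : ℤ) = ((2*m+k).choose m : ℤ) * m := by
      exact_mod_cast congrArg (Nat.cast : ℕ → ℤ) B
    have key : ((2*m+k : ℕ) : ℤ) * (c : ℤ) = (k : ℤ) * ((2*m+k).choose m : ℤ) := by
      rw [hmain]
      push_cast at AZ BZ ⊢
      linear_combination AZ - BZ
    exact_mod_cast key
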